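/- arXiv:2512.18042 — 2 statements merged into one kernel-verified Lean document; each statement's English description precedes it below -/
import Mathlib

section
/- Suppose that for every finite group G and every nonlinear χ ∈ Irr(G) there exist a proper subgroup H < G and ψ ∈ Irr(H) with ℚ(χ) ⊆ ℚ(ψ) and [ℚ(ψ) : ℚ(χ)] ≤ χ(1)/ψ(1). Then for every finite group G and every χ ∈ Irr(G), the cyclotomic deficiency satisfies [ℚ(ζ_{c(χ)}) : ℚ(χ)] ≤ χ(1). -/
open scoped Classical

/-- The field of values of a character `χ`. -/
noncomputable def Qfield {G : Type*} (χ : G → ℂ) : IntermediateField ℚ ℂ :=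
  IntermediateField.adjoin ℚ (Set.range χ)

/-- The `n`-th cyclotomic field inside `ℂ`. -/
noncomputable def Qcyc (n : ℕ) : IntermediateField ℚ ℂ :=
  IntermediateField.adjoin ℚ {x : ℂ | x ^ n = 1}

/-- The conductor of an abelian number field. -/
noncomputable def condF (F : IntermediateField ℚ ℂ) : ℕ :=
  sInf {n : ℕ | 0 < n ∧ F ≤ Qcyc n}

/-- Relative degree `[L : K]` via absolute degrees. -/
noncomputable def relDeg (K L : IntermediateField ℚ ℂ) : ℕ :=
  Module.finrank ℚ L / Module.finrank ℚ K

/-- `χ` is the character of a `d`-dimensional irreducible complex representation. -/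
def IsIrrCharOfDeg (G : Type*) [Group G] (χ : G → ℂ) (d : ℕ) : Prop :=
  ∃ ρ : Representation ℂ G (Fin d → ℂ),
    IsSimpleModule (MonoidAlgebra ℂ G) ρ.asModule ∧
    ∀ g, χ g = LinearMap.trace ℂ (Fin d → ℂ) (ρ g)

/-- `χ` is an irreducible complex character of `G`. -/
def IsIrrChar (G : Type*) [Group G] (χ : G → ℂ) : Prop :=
  ∃ d, IsIrrCharOfDeg G χ d

/-- `χ` is a complex character of `G`. -/
def IsChar (G : Type*) [Group G] (χ : G → ℂ) : Prop :=
  ∃ (d : ℕ) (ρ : Representation ℂ G (Fin d → ℂ)),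
    ∀ g, χ g = LinearMap.trace ℂ (Fin d → ℂ) (ρ g)

/-- Inner product of class functions. -/
noncomputable def innerChar {H : Type*} [Fintype H] (α β : H → ℂ) : ℂ :=
  (Fintype.card H : ℂ)⁻¹ * ∑ h, α h * (starRingEnd ℂ) (β h)

/-- The induced character `ψ^G`. -/
noncomputable def inducedChar {G : Type*} [Group G] [Fintype G] (H : Subgroup G)
    (ψ : H → ℂ) (g : G) : ℂ :=
  (Nat.card H : ℂ)⁻¹ *
    ∑ x : G, if h : x⁻¹ * g * x ∈ H then ψ ⟨x⁻¹ * g * x, h⟩ else 0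

open Module IntermediateField Polynomial Complex

lemma qcyc_mono {a b : ℕ} (h : a ∣ b) : Qcyc a ≤ Qcyc b := by
  apply IntermediateField.adjoin.mono
  rintro x hx
  obtain ⟨c, rfl⟩ := h
  simp only [Set.mem_setOf_eq] at hx ⊢
  rw [pow_mul, hx, one_pow]

noncomputable def pr (n : ℕ) : ℂ := Complex.exp (2 * Real.pi * Complex.I / n)

lemma pr_prim {n : ℕ} (hn : 0 < n) : IsPrimitiveRoot (pr n) n :=
  Complex.isPrimitiveRoot_exp n hn.ne'

lemma pr_integral {n : ℕ} (hn : 0 < n) : IsIntegral ℚ (pr n) := by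
  refine ⟨X ^ n - C 1, monic_X_pow_sub_C 1 hn.ne', ?_⟩
  simp [eval₂_sub, (pr_prim hn).pow_eq_one]

lemma qcyc_eq_adjoin {n : ℕ} (hn : 0 < n) : Qcyc n = ℚ⟮pr n⟯ := by
  apply le_antisymm
  · rw [Qcyc, IntermediateField.adjoin_le_iff]
    intro x hx
    haveI : NeZero n := ⟨hn.ne'⟩
    obtain ⟨i, _, rfl⟩ := (pr_prim hn).eq_pow_of_pow_eq_one hx
    exact pow_mem (IntermediateField.mem_adjoin_simple_self ℚ (pr n)) i
  · rw [IntermediateField.adjoin_simple_le_iff]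
    exact IntermediateField.subset_adjoin ℚ _ ((pr_prim hn).pow_eq_one)

lemma qcyc_fd {n : ℕ} (hn : 0 < n) : FiniteDimensional ℚ (Qcyc n) := by
  rw [qcyc_eq_adjoin hn]
  exact IntermediateField.adjoin.finiteDimensional (pr_integral hn)

lemma qcyc_finrank {n : ℕ} (hn : 0 < n) :
    Module.finrank ℚ (Qcyc n) = Nat.totient n := by
  rw [qcyc_eq_adjoin hn]
  have H := IntermediateField.adjoin_simple_toSubalgebra_of_isAlgebraic (pr_integral hn).isAlgebraic
  haveI : NeZero n := ⟨hn.ne'⟩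
  have hζ : IsPrimitiveRoot (pr n) n := pr_prim hn
  haveI : IsCyclotomicExtension {n} ℚ ℚ⟮pr n⟯ := by
    refine IsCyclotomicExtension.equiv _ _ _ (h := ?_) (.refl : ℚ⟮pr n⟯.toSubalgebra ≃ₐ[ℚ] _)
    rw [H]
    exact hζ.adjoin_isCyclotomicExtension ℚ
  have := IsCyclotomicExtension.finrank (n := n) (K := ℚ) ℚ⟮pr n⟯
    (Polynomial.cyclotomic.irreducible_rat hn)
  simpa using this

lemma qcyc_sup {a b : ℕ} (ha : 0 < a) (hb : 0 < b) :
    Qcyc a ⊔ Qcyc b = Qcyc (Nat.lcm a b) := by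
  apply le_antisymm
  · exact sup_le (qcyc_mono (Nat.dvd_lcm_left a b)) (qcyc_mono (Nat.dvd_lcm_right a b))
  · have hl : 0 < Nat.lcm a b := Nat.lcm_pos ha hb
    haveI : NeZero (Nat.lcm a b) := ⟨hl.ne'⟩
    rw [Qcyc, IntermediateField.adjoin_le_iff]
    intro x hx
    obtain ⟨i, _, rfl⟩ := (pr_prim hl).eq_pow_of_pow_eq_one hx
    refine pow_mem ?_ i
    set A := Nat.gcdA a b
    set B := Nat.gcdB a b
    have hg : ((Nat.gcd a b : ℕ) : ℂ) = (a : ℂ) * (A : ℂ) + (b : ℂ) * (B : ℂ) := by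
      exact_mod_cast congrArg (fun z : ℤ => (z : ℂ)) (Nat.gcd_eq_gcd_ab a b)
    have hgl : ((Nat.gcd a b : ℕ) : ℂ) * ((Nat.lcm a b : ℕ) : ℂ) = (a : ℂ) * (b : ℂ) := by
      exact_mod_cast congrArg (fun z : ℕ => (z : ℂ)) (Nat.gcd_mul_lcm a b)
    have ha' : (a : ℂ) ≠ 0 := Nat.cast_ne_zero.2 ha.ne'
    have hb' : (b : ℂ) ≠ 0 := Nat.cast_ne_zero.2 hb.ne'
    have hl' : ((Nat.lcm a b : ℕ) : ℂ) ≠ 0 := Nat.cast_ne_zero.2 hl.ne'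
    have key : pr (Nat.lcm a b) = pr a ^ B * pr b ^ A := by
      rw [pr, pr, pr, ← Complex.exp_int_mul, ← Complex.exp_int_mul, ← Complex.exp_add]
      congr 1
      have h1 : ((a : ℂ) * A + b * B) * ((Nat.lcm a b : ℕ) : ℂ) = a * b := by
        rw [← hg, hgl]
      field_simp
      linear_combination (-1 : ℂ) * h1
    rw [key]
    have hpa : pr a ∈ Qcyc a := IntermediateField.subset_adjoin ℚ _ ((pr_prim ha).pow_eq_one)
    have hpb : pr b ∈ Qcyc b := IntermediateField.subset_adjoin ℚ _ ((pr_prim hb).pow_eq_one)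
    exact mul_mem (zpow_mem (SetLike.le_def.1 le_sup_left hpa) B)
      (zpow_mem (SetLike.le_def.1 le_sup_right hpb) A)

lemma fd_of_le {K L : IntermediateField ℚ ℂ} (h : K ≤ L) [FiniteDimensional ℚ L] :
    FiniteDimensional ℚ K := by
  haveI : FiniteDimensional ℚ L.toSubmodule := ‹FiniteDimensional ℚ L›
  exact Submodule.finiteDimensional_of_le (show K.toSubmodule ≤ L.toSubmodule from h)

lemma finrank_dvd_of_le {K L : IntermediateField ℚ ℂ} (h : K ≤ L) :
    Module.finrank ℚ K ∣ Module.finrank ℚ L :=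
  Dvd.intro _ (IntermediateField.finrank_bot_mul_relfinrank h)

lemma totient_id {a b : ℕ} (ha : 0 < a) (hb : 0 < b) :
    Nat.totient (Nat.gcd a b) * Nat.totient (Nat.lcm a b) =
      Nat.totient a * Nat.totient b := by
  have t1 := Nat.totient_gcd_mul_totient_mul a b
  have t2 := Nat.totient_gcd_mul_totient_mul (Nat.gcd a b) (Nat.lcm a b)
  rw [Nat.gcd_eq_left ((Nat.gcd_dvd_left a b).trans (Nat.dvd_lcm_left a b)),
    Nat.gcd_mul_lcm] at t2
  have hg : 0 < Nat.gcd a b := Nat.gcd_pos_of_pos_left _ ha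
  exact Nat.eq_of_mul_eq_mul_right hg (t2.symm.trans t1)

lemma le_qcyc_gcd {F : IntermediateField ℚ ℂ} {a b : ℕ} (ha : 0 < a) (hb : 0 < b)
    (hFa : F ≤ Qcyc a) (hFb : F ≤ Qcyc b) : F ≤ Qcyc (Nat.gcd a b) := by
  set g := Nat.gcd a b with hgdef
  set l := Nat.lcm a b with hldef
  have hg : 0 < g := Nat.gcd_pos_of_pos_left _ ha
  have hl : 0 < l := Nat.lcm_pos ha hb
  haveI fdl : FiniteDimensional ℚ (Qcyc l) := qcyc_fd hl
  have hAl : Qcyc a ≤ Qcyc l := qcyc_mono (Nat.dvd_lcm_left a b)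
  have hBl : Qcyc b ≤ Qcyc l := qcyc_mono (Nat.dvd_lcm_right a b)
  haveI fdA : FiniteDimensional ℚ (Qcyc a) := qcyc_fd ha
  haveI fdB : FiniteDimensional ℚ (Qcyc b) := qcyc_fd hb
  set K0 : IntermediateField ℚ ℂ := Qcyc a ⊓ Qcyc b with hK0
  haveI fdK0 : FiniteDimensional ℚ K0 := fd_of_le inf_le_left
  have hCK0 : Qcyc g ≤ K0 :=
    le_inf (qcyc_mono (Nat.gcd_dvd_left a b)) (qcyc_mono (Nat.gcd_dvd_right a b))
  -- relative ranks
  have h0A : K0 ≤ Qcyc a := inf_le_left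
  have h0B : K0 ≤ Qcyc b := inf_le_right
  have h0S : K0 ≤ Qcyc a ⊔ Qcyc b := h0A.trans le_sup_left
  set k0 := Module.finrank ℚ K0 with hk0
  have eA : k0 * IntermediateField.relfinrank K0 (Qcyc a) = Nat.totient a := by
    rw [IntermediateField.finrank_bot_mul_relfinrank h0A, qcyc_finrank ha]
  have eB : k0 * IntermediateField.relfinrank K0 (Qcyc b) = Nat.totient b := by
    rw [IntermediateField.finrank_bot_mul_relfinrank h0B, qcyc_finrank hb]
  have eS : k0 * IntermediateField.relfinrank K0 (Qcyc a ⊔ Qcyc b) = Nat.totient l := by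
    rw [IntermediateField.finrank_bot_mul_relfinrank h0S, qcyc_sup ha hb, qcyc_finrank hl]
  have hsle : IntermediateField.relfinrank K0 (Qcyc a ⊔ Qcyc b) ≤
      IntermediateField.relfinrank K0 (Qcyc a) * IntermediateField.relfinrank K0 (Qcyc b) := by
    rw [IntermediateField.relfinrank_eq_finrank_of_le h0S,
      IntermediateField.relfinrank_eq_finrank_of_le h0A,
      IntermediateField.relfinrank_eq_finrank_of_le h0B]
    have hes := IntermediateField.extendScalars_sup h0A h0B
    have := IntermediateField.finrank_sup_le
      (E1 := IntermediateField.extendScalars h0A) (E2 := IntermediateField.extendScalars h0B)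
    rwa [hes] at this
  have hφl : 0 < Nat.totient l := Nat.totient_pos.2 hl
  have hnum : k0 * Nat.totient l ≤ Nat.totient (Nat.gcd a b) * Nat.totient l := by
    calc k0 * Nat.totient l = k0 * (k0 * IntermediateField.relfinrank K0 (Qcyc a ⊔ Qcyc b)) := by
          rw [eS]
      _ ≤ k0 * (k0 * (IntermediateField.relfinrank K0 (Qcyc a) *
            IntermediateField.relfinrank K0 (Qcyc b))) := by
          exact Nat.mul_le_mul_left _ (Nat.mul_le_mul_left _ hsle)
      _ = (k0 * IntermediateField.relfinrank K0 (Qcyc a)) *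
            (k0 * IntermediateField.relfinrank K0 (Qcyc b)) := by ring
      _ = Nat.totient a * Nat.totient b := by rw [eA, eB]
      _ = Nat.totient (Nat.gcd a b) * Nat.totient l := (totient_id ha hb).symm
  have hk0le : k0 ≤ Nat.totient (Nat.gcd a b) := Nat.le_of_mul_le_mul_right hnum hφl
  have hEq : Qcyc g = K0 := by
    refine IntermediateField.eq_of_le_of_finrank_le hCK0 ?_
    rw [qcyc_finrank hg]
    exact hk0le
  rw [hEq]
  exact le_inf hFa hFb


lemma condF_spec {F : IntermediateField ℚ ℂ} {N : ℕ} (hN : 0 < N) (hF : F ≤ Qcyc N) :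
    0 < condF F ∧ F ≤ Qcyc (condF F) ∧ condF F ∣ N := by
  have hne : N ∈ {n : ℕ | 0 < n ∧ F ≤ Qcyc n} := ⟨hN, hF⟩
  have hmem : condF F ∈ {n : ℕ | 0 < n ∧ F ≤ Qcyc n} := Nat.sInf_mem ⟨N, hne⟩
  obtain ⟨hc, hFc⟩ := hmem
  refine ⟨hc, hFc, ?_⟩
  have hgpos : 0 < Nat.gcd (condF F) N := Nat.gcd_pos_of_pos_left _ hc
  have hgmem : Nat.gcd (condF F) N ∈ {n : ℕ | 0 < n ∧ F ≤ Qcyc n} :=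
    ⟨hgpos, le_qcyc_gcd hc hN hFc hF⟩
  have h1 : condF F ≤ Nat.gcd (condF F) N := Nat.sInf_le hgmem
  have h2 : Nat.gcd (condF F) N ≤ condF F := Nat.le_of_dvd hc (Nat.gcd_dvd_left _ _)
  have : Nat.gcd (condF F) N = condF F := le_antisymm h2 h1
  rw [← this]
  exact Nat.gcd_dvd_right _ _

lemma trace_mem_qcyc {G : Type} [Group G] [Fintype G] (ρ : Representation ℂ G (Fin d → ℂ))
    (g : G) : LinearMap.trace ℂ (Fin d → ℂ) (ρ g) ∈ Qcyc (Fintype.card G) := by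
  set N := Fintype.card G with hN
  set b := Pi.basisFun ℂ (Fin d)
  set f := ρ g with hf
  set M := LinearMap.toMatrix b b f with hM
  have hfN : f ^ N = 1 := by rw [hf, ← map_pow, pow_card_eq_one, map_one]
  have hMN : M ^ N = 1 := by
    have : ∀ k : ℕ, M ^ k = LinearMap.toMatrix b b (f ^ k) := by
      intro k
      induction k with
      | zero => simp
      | succ k ih => rw [pow_succ, pow_succ, ih, ← LinearMap.toMatrix_mul]
    rw [this N, hfN]
    simp
  have htr : LinearMap.trace ℂ (Fin d → ℂ) f = Matrix.trace M :=
    LinearMap.trace_eq_matrix_trace ℂ b f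
  rw [htr, Matrix.trace_eq_sum_roots_charpoly]
  refine (Qcyc N).toSubalgebra.multiset_sum_mem ?_
  intro μ hμ
  have hroot : Polynomial.eval μ M.charpoly = 0 := by
    have := Polynomial.isRoot_of_mem_roots hμ
    exact this
  have hdet : (Matrix.scalar (Fin d) μ - M).det = 0 := by
    rw [Matrix.charpoly, _root_.eval_det, Matrix.matPolyEquiv_charmatrix] at hroot
    simpa using hroot
  obtain ⟨v, hv0, hv⟩ := (Matrix.exists_mulVec_eq_zero_iff).2 hdet
  have hvM : M.mulVec v = μ • v := by
    have h1 : (Matrix.scalar (Fin d) μ - M).mulVec v = 0 := hv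
    rw [Matrix.sub_mulVec] at h1
    have h2 : (Matrix.scalar (Fin d) μ).mulVec v = μ • v := by
      funext i
      simp [Matrix.scalar, Matrix.mulVec_diagonal]
    rw [h2] at h1
    exact (sub_eq_zero.1 h1).symm
  have hpow : ∀ k : ℕ, (M ^ k).mulVec v = μ ^ k • v := by
    intro k
    induction k with
    | zero => simp [Matrix.one_mulVec]
    | succ k ih =>
      rw [pow_succ, ← Matrix.mulVec_mulVec, hvM, Matrix.mulVec_smul, ih, smul_smul,
        ← pow_succ']
  have hone : μ ^ N • v = v := by
    rw [← hpow, hMN, Matrix.one_mulVec]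
  obtain ⟨i, hi⟩ := Function.ne_iff.1 hv0
  have h3 : μ ^ N * v i = v i := by simpa using congrFun hone i
  have hμN : μ ^ N = 1 := by
    have h4 : μ ^ N * v i = 1 * v i := by rw [one_mul]; exact h3
    exact mul_right_cancel₀ hi h4
  exact IntermediateField.subset_adjoin ℚ _ hμN


lemma qfield_le_qcyc {G : Type} [Group G] [Fintype G] {χ : G → ℂ} {d : ℕ}
    (h : IsIrrCharOfDeg G χ d) : Qfield χ ≤ Qcyc (Fintype.card G) := by
  obtain ⟨ρ, -, hχ⟩ := h
  rw [Qfield, IntermediateField.adjoin_le_iff]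
  rintro - ⟨g, rfl⟩
  rw [hχ g]
  exact trace_mem_qcyc ρ g

lemma trace_fin_one_mul (f g : (Fin 1 → ℂ) →ₗ[ℂ] Fin 1 → ℂ) :
    LinearMap.trace ℂ (Fin 1 → ℂ) (f * g) =
      LinearMap.trace ℂ (Fin 1 → ℂ) f * LinearMap.trace ℂ (Fin 1 → ℂ) g := by
  set b := Pi.basisFun ℂ (Fin 1)
  rw [LinearMap.trace_eq_matrix_trace ℂ b, LinearMap.trace_eq_matrix_trace ℂ b,
    LinearMap.trace_eq_matrix_trace ℂ b, LinearMap.toMatrix_mul,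
    Matrix.trace_fin_one, Matrix.trace_fin_one, Matrix.trace_fin_one, Matrix.mul_apply]
  simp

lemma linear_char_qfield {G : Type} [Group G] [Fintype G] {χ : G → ℂ}
    (h : IsIrrCharOfDeg G χ 1) : ∃ m : ℕ, 0 < m ∧ Qfield χ = Qcyc m := by
  obtain ⟨ρ, -, hχ⟩ := h
  have hone : χ 1 = 1 := by
    rw [hχ, map_one]
    rw [show (1 : (Fin 1 → ℂ) →ₗ[ℂ] Fin 1 → ℂ) = LinearMap.id from rfl]
    simp [LinearMap.trace_one]
  have hmul : ∀ g k : G, χ (g * k) = χ g * χ k := by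
    intro g k
    rw [hχ, hχ, hχ, map_mul]
    exact trace_fin_one_mul _ _
  have hunit : ∀ g : G, χ g * χ g⁻¹ = 1 := by
    intro g; rw [← hmul, mul_inv_cancel, hone]
  let θ : G →* ℂˣ :=
    { toFun := fun g => ⟨χ g, χ g⁻¹, hunit g, by rw [mul_comm]; exact hunit g⟩
      map_one' := by ext; simp [hone]
      map_mul' := by intro g k; ext; simp [hmul] }
  haveI : Finite ↥θ.range := by
    have : (θ.range : Set ℂˣ) = Set.range θ := by
      ext x; simp [MonoidHom.mem_range, Set.mem_range]
    rw [show (↥θ.range : Type) = ↥(θ.range : Set ℂˣ) from rfl]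
    rw [this]
    exact (Set.finite_range θ).to_subtype
  haveI : IsCyclic ↥θ.range := subgroup_units_cyclic _
  obtain ⟨ζu, hζu⟩ := IsCyclic.exists_generator (α := ↥θ.range)
  set m := orderOf ζu with hm
  have hmpos : 0 < m := orderOf_pos ζu
  set ζ : ℂ := ((ζu : ℂˣ) : ℂ) with hζ
  have hord : orderOf ζ = m := by
    rw [hζ, orderOf_units, hm]
    exact orderOf_injective θ.range.subtype Subtype.coe_injective ζu
  have hprim : IsPrimitiveRoot ζ m := hord ▸ IsPrimitiveRoot.orderOf ζ
  refine ⟨m, hmpos, le_antisymm ?_ ?_⟩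
  · rw [Qfield, IntermediateField.adjoin_le_iff]
    rintro - ⟨g, rfl⟩
    have hg : (⟨θ g, g, rfl⟩ : ↥θ.range) ^ m = 1 := by
      obtain ⟨k, hk⟩ := hζu ⟨θ g, g, rfl⟩
      rw [← hk, ← zpow_natCast, ← zpow_mul, mul_comm, zpow_mul]
      norm_cast
      rw [pow_orderOf_eq_one, one_zpow]
    apply IntermediateField.subset_adjoin
    have : χ g = ((θ g : ℂˣ) : ℂ) := rfl
    rw [this]
    show ((θ g : ℂˣ) : ℂ) ^ m = 1
    have := congrArg (fun x : ↥θ.range => ((x : ℂˣ) : ℂ)) hg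
    push_cast at this
    simpa using this
  · rw [Qcyc, IntermediateField.adjoin_le_iff]
    intro x hx
    haveI : NeZero m := ⟨hmpos.ne'⟩
    obtain ⟨i, -, rfl⟩ := hprim.eq_pow_of_pow_eq_one hx
    refine pow_mem ?_ i
    obtain ⟨g0, hg0⟩ := ζu.2
    have : ζ = χ g0 := by rw [hζ, ← hg0]; rfl
    rw [this]
    exact IntermediateField.subset_adjoin ℚ _ ⟨g0, rfl⟩

lemma deg_pos {G : Type} [Group G] {χ : G → ℂ} {d : ℕ} (h : IsIrrCharOfDeg G χ d) : 0 < d := by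
  rcases Nat.eq_zero_or_pos d with rfl | hd
  · obtain ⟨ρ, hs, -⟩ := h
    haveI : Subsingleton ρ.asModule := inferInstanceAs (Subsingleton (Fin 0 → ℂ))
    haveI := hs.nontrivial
    exact absurd (Subsingleton.elim _ _) (exists_pair_ne ρ.asModule).choose_spec.choose_spec
  · exact hd



theorem stmt8
    (hyp : ∀ (G : Type) [Group G] [Fintype G] (χ : G → ℂ) (d : ℕ),
      IsIrrCharOfDeg G χ d → 1 < d →
      ∃ (H : Subgroup G) (ψ : ↥H → ℂ) (e : ℕ), H ≠ ⊤ ∧ IsIrrCharOfDeg ↥H ψ e ∧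
        Qfield χ ≤ Qfield ψ ∧ relDeg (Qfield χ) (Qfield ψ) * e ≤ d) :
    ∀ (G : Type) [Group G] [Fintype G] (χ : G → ℂ) (d : ℕ), IsIrrCharOfDeg G χ d →
      relDeg (Qfield χ) (Qcyc (condF (Qfield χ))) ≤ d := by
  have main : ∀ (n : ℕ) (G : Type) (_ : Group G) (_ : Fintype G) (χ : G → ℂ) (d : ℕ),
      Fintype.card G ≤ n → IsIrrCharOfDeg G χ d →
      relDeg (Qfield χ) (Qcyc (condF (Qfield χ))) ≤ d := by
    intro n
    induction n with
    | zero =>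
      intro G _ _ χ d hcard _
      exact absurd (lt_of_lt_of_le Fintype.card_pos hcard) (lt_irrefl 0)
    | succ n IH =>
      intro G _ _ χ d hcard h
      have hN : 0 < Fintype.card G := Fintype.card_pos
      have hQF : Qfield χ ≤ Qcyc (Fintype.card G) := qfield_le_qcyc h
      obtain ⟨hc1pos, hc1le, -⟩ := condF_spec hN hQF
      have hd1 := deg_pos h
      rcases eq_or_lt_of_le (show 1 ≤ d from hd1) with hd | hd
      · -- base case : d = 1
        obtain ⟨m, hm, hQm⟩ := linear_char_qfield (hd ▸ h)
        obtain ⟨-, -, hdvd⟩ := condF_spec hm (le_of_eq hQm)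
        have hφ : Nat.totient (condF (Qfield χ)) ≤ Nat.totient m :=
          Nat.le_of_dvd (Nat.totient_pos.2 hm) (Nat.totient_dvd_of_dvd hdvd)
        have hden : Module.finrank ℚ (Qfield χ) = Nat.totient m := by
          rw [hQm, qcyc_finrank hm]
        rw [relDeg, hden, qcyc_finrank hc1pos]
        calc Nat.totient (condF (Qfield χ)) / Nat.totient m
            ≤ Nat.totient m / Nat.totient m := Nat.div_le_div_right hφ
          _ ≤ d := by rw [Nat.div_self (Nat.totient_pos.2 hm)]; exact hd1
      · -- inductive step : 1 < d
        obtain ⟨H, ψ, e, hHne, hψ, hle, hmul⟩ := hyp G χ d h hd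
        have hcardH : Fintype.card ↥H < Fintype.card G := by
          rw [← Nat.card_eq_fintype_card, ← Nat.card_eq_fintype_card]
          refine lt_of_le_of_ne (Nat.card_le_card_of_injective H.subtype
            Subtype.coe_injective) (fun heq => hHne (Subgroup.eq_top_of_card_eq H heq))
        have IHψ := IH ↥H inferInstance inferInstance ψ e
          (Nat.le_of_lt_succ (lt_of_lt_of_le hcardH hcard)) hψ
        set c2 := condF (Qfield ψ) with hc2def
        have hNH : 0 < Fintype.card ↥H := Fintype.card_pos
        have hQψ : Qfield ψ ≤ Qcyc (Fintype.card ↥H) := qfield_le_qcyc hψ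
        obtain ⟨hc2pos, hc2le, -⟩ := condF_spec hNH hQψ
        have hχc2 : Qfield χ ≤ Qcyc c2 := hle.trans hc2le
        obtain ⟨-, -, hc1dvdc2⟩ := condF_spec hc2pos hχc2
        haveI fd2 : FiniteDimensional ℚ (Qcyc c2) := qcyc_fd hc2pos
        haveI fdL : FiniteDimensional ℚ (Qfield ψ) := fd_of_le hc2le
        haveI fdK : FiniteDimensional ℚ (Qfield χ) := fd_of_le hχc2
        set k := Module.finrank ℚ (Qfield χ) with hk
        set l := Module.finrank ℚ (Qfield ψ) with hl
        have hkpos : 0 < k := Module.finrank_pos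
        have hlpos : 0 < l := Module.finrank_pos
        obtain ⟨j, hj⟩ : k ∣ l := finrank_dvd_of_le hle
        obtain ⟨w, hw⟩ : l ∣ Nat.totient c2 := by
          rw [← qcyc_finrank hc2pos]
          exact finrank_dvd_of_le hc2le
        have hq1q2 : Nat.totient (condF (Qfield χ)) ≤ Nat.totient c2 :=
          Nat.le_of_dvd (Nat.totient_pos.2 hc2pos) (Nat.totient_dvd_of_dvd hc1dvdc2)
        rw [relDeg, qcyc_finrank hc1pos, ← hk]
        have hdiv : Nat.totient c2 / k = j * w := by
          rw [hw, hj, mul_assoc]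
          exact Nat.mul_div_cancel_left _ hkpos
        have hjw : l / k = j := by rw [hj]; exact Nat.mul_div_cancel_left _ hkpos
        have hwval : Nat.totient c2 / l = w := by rw [hw]; exact Nat.mul_div_cancel_left _ hlpos
        calc Nat.totient (condF (Qfield χ)) / k
            ≤ Nat.totient c2 / k := Nat.div_le_div_right hq1q2
          _ = j * w := hdiv
          _ ≤ j * e := by
              refine Nat.mul_le_mul_left _ ?_
              rw [← hwval]
              have : relDeg (Qfield ψ) (Qcyc c2) = Nat.totient c2 / l := by
                rw [relDeg, qcyc_finrank hc2pos]
              rw [← this]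
              exact IHψ
          _ ≤ d := by
              rw [← hjw]
              have : relDeg (Qfield χ) (Qfield ψ) = l / k := by rw [relDeg]
              rw [← this]
              exact hmul
  intro G _ _ χ d h
  exact main (Fintype.card G) G _ _ χ d le_rfl h
end

section
/- Conversely, suppose that for every finite group G and χ ∈ Irr(G), both (a) G contains an element of order c(χ) and (b) [ℚ(ζ_{c(χ)}) : ℚ(χ)] ≤ χ(1) hold. Then for every finite group G and nonlinear χ ∈ Irr(G), there exist a proper subgroup H < G and ψ ∈ Irr(H) with ℚ(χ) ⊆ ℚ(ψ) and [ℚ(ψ) : ℚ(χ)] ≤ χ(1)/ψ(1). -/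
open scoped Classical

/-! ### Auxiliary lemmas -/

lemma algsmul {G : Type} [Group G] {V : Type} [AddCommGroup V] [Module ℂ V]
    (ρ : Representation ℂ G V) (a : ℂ) (x : ρ.asModule) :
    (algebraMap ℂ (MonoidAlgebra ℂ G) a) • x = a • x := by
  show ρ.asAlgebraHom (algebraMap ℂ _ a) x = a • x
  rw [AlgHom.commutes]; rfl

lemma repTower {G : Type} [Group G] {V : Type} [AddCommGroup V] [Module ℂ V]
    (ρ : Representation ℂ G V) : IsScalarTower ℂ (MonoidAlgebra ℂ G) ρ.asModule := by
  constructor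
  intro c a x
  show ρ.asAlgebraHom (c • a) x = c • (ρ.asAlgebraHom a x)
  rw [map_smul]; rfl

/-- The `ℂ`-linear equivalence between `ρ.asModule` and the underlying space. -/
noncomputable def asModLequiv {G : Type} [Group G] {V : Type} [AddCommGroup V] [Module ℂ V]
    (ρ : Representation ℂ G V) : ρ.asModule ≃ₗ[ℂ] V :=
  { ρ.asModuleEquiv with map_smul' := fun _ _ => rfl }

lemma oneDimSimple {G : Type} [Group G] (ρ : Representation ℂ G (Fin 1 → ℂ)) :
    IsSimpleModule (MonoidAlgebra ℂ G) ρ.asModule := by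
  haveI : Nontrivial ρ.asModule := inferInstanceAs (Nontrivial (Fin 1 → ℂ))
  rw [isSimpleModule_iff]
  refine { eq_bot_or_eq_top := ?_ }
  intro p
  rcases eq_or_ne p ⊥ with h | h
  · exact Or.inl h
  refine Or.inr ?_
  obtain ⟨x, hxp, hx0⟩ := Submodule.exists_mem_ne_zero_of_ne_bot h
  rw [eq_top_iff]
  intro y _
  have hx0' : (x : Fin 1 → ℂ) 0 ≠ 0 := by
    intro h0
    apply hx0
    funext i
    fin_cases i
    exact h0
  have : y = (algebraMap ℂ (MonoidAlgebra ℂ G) ((y : Fin 1 → ℂ) 0 / x 0)) • x := by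
    rw [algsmul]
    show y = (y 0 / x 0) • x
    funext i
    fin_cases i
    show y 0 = (y 0 / x 0) * x 0
    field_simp
  rw [this]
  exact Submodule.smul_mem p _ hxp

/-- The one-dimensional representation attached to a linear character. -/
noncomputable def scalarRep {H : Type} [Group H] (φ : H →* ℂˣ) :
    Representation ℂ H (Fin 1 → ℂ) where
  toFun h := ((φ h : ℂ)) • LinearMap.id
  map_one' := by simp; rfl
  map_mul' x y := by
    ext v i
    simp [mul_smul, mul_comm, mul_assoc, mul_left_comm]

lemma scalarRep_trace {H : Type} [Group H] (φ : H →* ℂˣ) (h : H) :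
    LinearMap.trace ℂ (Fin 1 → ℂ) (scalarRep φ h) = (φ h : ℂ) := by
  have : (scalarRep φ h) = ((φ h : ℂ)) • LinearMap.id := rfl
  rw [this, map_smul, LinearMap.trace_id]
  simp

lemma dim_one_of_commGroup {G : Type} [CommGroup G] [Fintype G] {d : ℕ}
    (ρ : Representation ℂ G (Fin d → ℂ))
    (hs : IsSimpleModule (MonoidAlgebra ℂ G) ρ.asModule) : d = 1 := by
  set A := MonoidAlgebra ℂ G with hA
  obtain ⟨I, hI, ⟨e⟩⟩ := isSimpleModule_iff_quot_maximal.mp hs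
  haveI : Module.Finite ℂ A := inferInstance
  haveI : Module.Finite ℂ (A ⧸ I) :=
    Module.Finite.of_surjective (Ideal.Quotient.mkₐ ℂ I).toLinearMap
      (Ideal.Quotient.mk_surjective)
  letI : Field (A ⧸ I) := Ideal.Quotient.field I
  haveI : Algebra.IsAlgebraic ℂ (A ⧸ I) := Algebra.IsAlgebraic.of_finite ℂ _
  have hbij : Function.Bijective (algebraMap ℂ (A ⧸ I)) :=
    ⟨(algebraMap ℂ (A ⧸ I)).injective,
      IsAlgClosed.algebraMap_bijective_of_isIntegral.2⟩
  have hq1 : Module.finrank ℂ (A ⧸ I) = 1 := by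
    have e2 : ℂ ≃ₗ[ℂ] (A ⧸ I) := LinearEquiv.ofBijective (Algebra.linearMap ℂ (A ⧸ I)) hbij
    rw [← e2.finrank_eq, Module.finrank_self]
  haveI := repTower ρ
  have e3 : ρ.asModule ≃ₗ[ℂ] (A ⧸ I) := e.restrictScalars ℂ
  have hfr : Module.finrank ℂ ρ.asModule = d := by
    rw [(asModLequiv ρ).finrank_eq]
    simp
  rw [← hfr, e3.finrank_eq, hq1]

lemma dim_one_of_comm {G : Type} [Group G] [Fintype G] (hc : ∀ a b : G, a * b = b * a) {d : ℕ}
    (ρ : Representation ℂ G (Fin d → ℂ))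
    (hs : IsSimpleModule (MonoidAlgebra ℂ G) ρ.asModule) : d = 1 := by
  letI : CommGroup G := { (inferInstance : Group G) with mul_comm := hc }
  exact dim_one_of_commGroup ρ hs

lemma zpowers_isCyclic {G : Type*} [Group G] (g : G) : IsCyclic (Subgroup.zpowers g) :=
  ⟨⟨g, Subgroup.mem_zpowers g⟩, fun x => by
     obtain ⟨k, hk⟩ := x.2
     exact ⟨k, Subtype.ext (by simpa using hk)⟩⟩

theorem stmt10
    (hyp : ∀ (G : Type) [Group G] [Fintype G] (χ : G → ℂ) (d : ℕ),
      IsIrrCharOfDeg G χ d →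
        (∃ g : G, orderOf g = condF (Qfield χ)) ∧
          relDeg (Qfield χ) (Qcyc (condF (Qfield χ))) ≤ d) :
    ∀ (G : Type) [Group G] [Fintype G] (χ : G → ℂ) (d : ℕ),
      IsIrrCharOfDeg G χ d → 1 < d →
      ∃ (H : Subgroup G) (ψ : ↥H → ℂ) (e : ℕ), H ≠ ⊤ ∧ IsIrrCharOfDeg ↥H ψ e ∧
        Qfield χ ≤ Qfield ψ ∧ relDeg (Qfield χ) (Qfield ψ) * e ≤ d := by
  intro G _ _ χ d hχ hd
  obtain ⟨⟨g, hg⟩, hdeg⟩ := hyp G χ d hχ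
  set c := condF (Qfield χ) with hcdef
  have hcpos : 0 < c := hg ▸ orderOf_pos g
  have hmem : 0 < c ∧ Qfield χ ≤ Qcyc c := by
    have hne : {n : ℕ | 0 < n ∧ Qfield χ ≤ Qcyc n}.Nonempty := by
      by_contra hne
      rw [Set.not_nonempty_iff_eq_empty] at hne
      have : c = 0 := by
        rw [hcdef]
        unfold condF
        rw [hne]
        simp
      omega
    exact Nat.sInf_mem hne
  -- roots of unity setup
  have hζ := Complex.isPrimitiveRoot_exp c hcpos.ne'
  have hu : IsUnit (Complex.exp (2 * Real.pi * Complex.I / c)) := hζ.isUnit hcpos.ne'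
  have hζu : IsPrimitiveRoot hu.unit c := hζ.isUnit_unit hcpos.ne'
  haveI h1 : IsCyclic (Subgroup.zpowers g) := zpowers_isCyclic g
  haveI h2 : IsCyclic (Subgroup.zpowers hu.unit) := zpowers_isCyclic _
  have hcard : Nat.card (Subgroup.zpowers g) = Nat.card (Subgroup.zpowers hu.unit) := by
    rw [Nat.card_zpowers, Nat.card_zpowers, hg, ← hζu.eq_orderOf]
  set e := mulEquivOfCyclicCardEq hcard with he
  set φ : (Subgroup.zpowers g) →* ℂˣ :=
    (Subgroup.zpowers hu.unit).subtype.comp e.toMonoidHom with hφ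
  set ψ : (Subgroup.zpowers g) → ℂ := fun h => ((φ h : ℂˣ) : ℂ) with hψ
  have hrange : Set.range ψ = {x : ℂ | x ^ c = 1} := by
    ext x
    constructor
    · rintro ⟨h, rfl⟩
      show ((φ h : ℂˣ) : ℂ) ^ c = 1
      obtain ⟨k, hk⟩ := (e h).2
      have h3 : (φ h : ℂˣ) = hu.unit ^ k := hk.symm
      have h4 : (φ h : ℂˣ) ^ c = 1 := by
        rw [h3, ← zpow_natCast, ← zpow_mul, mul_comm k (c : ℤ), zpow_mul, zpow_natCast,
          hζu.pow_eq_one, one_zpow]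
      rw [← Units.val_pow_eq_pow_val, h4, Units.val_one]
    · rintro hx
      haveI : NeZero c := ⟨hcpos.ne'⟩
      obtain ⟨i, _, hi⟩ := hζ.eq_pow_of_pow_eq_one hx
      have hz : hu.unit ^ i ∈ Subgroup.zpowers hu.unit :=
        pow_mem (Subgroup.mem_zpowers _) i
      refine ⟨e.symm ⟨hu.unit ^ i, hz⟩, ?_⟩
      have h5 : φ (e.symm ⟨hu.unit ^ i, hz⟩) = hu.unit ^ i := by
        show ((e (e.symm _) : (Subgroup.zpowers hu.unit)) : ℂˣ) = _
        rw [MulEquiv.apply_symm_apply]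
      show ((φ _ : ℂˣ) : ℂ) = x
      rw [h5, ← hi]
      norm_cast
  have hQψ : Qfield ψ = Qcyc c := by
    show IntermediateField.adjoin ℚ (Set.range ψ) =
      IntermediateField.adjoin ℚ {x : ℂ | x ^ c = 1}
    rw [hrange]
  refine ⟨Subgroup.zpowers g, ψ, 1, ?_, ?_, ?_, ?_⟩
  · intro htop
    obtain ⟨ρ, hs, _⟩ := hχ
    have hcomm : ∀ a b : G, a * b = b * a := by
      intro a b
      have ha : a ∈ Subgroup.zpowers g := htop ▸ Subgroup.mem_top a
      have hb : b ∈ Subgroup.zpowers g := htop ▸ Subgroup.mem_top b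
      obtain ⟨m, hm⟩ := ha
      obtain ⟨n, hn⟩ := hb
      rw [← hm, ← hn, ← zpow_add, ← zpow_add, add_comm]
    have := dim_one_of_comm hcomm ρ hs
    omega
  · exact ⟨scalarRep φ, oneDimSimple _, fun h => (scalarRep_trace φ h).symm⟩
  · rw [hQψ]
    exact hmem.2
  · rw [hQψ, mul_one]
    exact hdeg
end
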